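/- Every tree of order n with maximum degree at most k (for k ≥ 3) has a matching of size at least (n-1)/k. -/

import Mathlib

open SimpleGraph Walk

lemma exists_leaf {V : Type*} [Fintype V] {G : SimpleGraph V} (hac : G.IsAcyclic)
    {x y : V} (hxy : G.Adj x y) :
    ∃ p u : V, G.Adj p u ∧ (G.neighborSet u).ncard = 1 := by
  classical
  suffices aux : ∀ m : ℕ, ∀ (a b : V) (P : G.Walk a b), P.IsPath →
      (∃ w, G.Adj w b) → Fintype.card V - P.length ≤ m →
      ∃ p u, G.Adj p u ∧ (G.neighborSet u).ncard = 1 by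
    exact aux (Fintype.card V) x y (Walk.cons hxy Walk.nil)
      (by simp [hxy.ne]) ⟨x, hxy⟩ (by omega)
  intro m
  induction m with
  | zero =>
    intro a b P hP _ hle
    have h1 : P.support.length = P.length + 1 := P.length_support
    have h2 : P.support.length ≤ Fintype.card V := hP.support_nodup.length_le_card
    omega
  | succ m ih =>
    intro a b P hP hb hle
    obtain ⟨w, hw⟩ := hb
    by_cases hone : (G.neighborSet b).ncard = 1
    · exact ⟨w, b, hw, hone⟩
    · have hwb : w ∈ G.neighborSet b := hw.symm
      have hfin : (G.neighborSet b).Finite := Set.toFinite _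
      have hpos : 0 < (G.neighborSet b).ncard := (Set.ncard_pos hfin).mpr ⟨w, hwb⟩
      have h2 : 1 < (G.neighborSet b).ncard := by omega
      by_cases hall : ∀ c ∈ G.neighborSet b, c ∈ P.support
      · -- contradiction with acyclicity
        exfalso
        obtain ⟨c₁, c₂, hc₁, hc₂, hne⟩ := (Set.one_lt_ncard_iff hfin).mp h2
        have key : ∀ c (hc : c ∈ G.neighborSet b), c = P.getVert (P.length - 1) := by
          intro c hc
          have hcs : c ∈ P.support := hall c hc
          have hq : (P.dropUntil c hcs).IsPath := hP.dropUntil hcs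
          have hr : (Walk.cons (G.adj_symm hc) Walk.nil : G.Walk c b).IsPath := by
            simp [Walk.cons_isPath_iff, (G.adj_symm hc).ne]
          have := hac.path_unique ⟨P.dropUntil c hcs, hq⟩ ⟨Walk.cons (G.adj_symm hc) Walk.nil, hr⟩
          have heq : P.dropUntil c hcs = Walk.cons (G.adj_symm hc) Walk.nil :=
            congrArg Subtype.val this
          have hlen : (P.dropUntil c hcs).length = 1 := by rw [heq]; simp
          have hspec := P.take_spec hcs
          have hlen2 : (P.takeUntil c hcs).length + 1 = P.length := by
            conv_rhs => rw [← hspec]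
            rw [Walk.length_append, hlen]
          have := Walk.getVert_append (P.takeUntil c hcs) (P.dropUntil c hcs)
            (P.takeUntil c hcs).length
          rw [hspec] at this
          simp only [lt_self_iff_false, if_false, Nat.sub_self] at this
          rw [Walk.getVert_zero] at this
          rw [← this]
          congr 1
          omega
        exact hne ((key c₁ hc₁).trans (key c₂ hc₂).symm)
      · push_neg at hall
        obtain ⟨c, hc, hcs⟩ := hall
        have hbc : G.Adj b c := hc
        have hQ : ((Walk.cons hbc.symm P.reverse).reverse).IsPath := by
          apply Walk.IsPath.reverse
          exact hP.reverse.cons (by rwa [Walk.support_reverse, List.mem_reverse])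
        refine ih a c ((Walk.cons hbc.symm P.reverse).reverse) hQ ⟨b, hbc⟩ ?_
        have : ((Walk.cons hbc.symm P.reverse).reverse).length = P.length + 1 := by
          simp
        omega

lemma forest_bound {V : Type*} [Fintype V] (k : ℕ) (hk : 1 ≤ k) :
    ∀ (n : ℕ) (G : SimpleGraph V), G.edgeSet.ncard ≤ n → G.IsAcyclic →
      (∀ v, (G.neighborSet v).ncard ≤ k) →
      ∃ M : G.Subgraph, M.IsMatching ∧ G.edgeSet.ncard ≤ k * M.edgeSet.ncard := by
  intro n
  induction n with
  | zero =>
    intro G hn _ _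
    refine ⟨⊥, fun v hv => by simp at hv, by omega⟩
  | succ n ih =>
    intro G hn hac hdeg
    classical
    by_cases hE : G.edgeSet = ∅
    · exact ⟨⊥, fun v hv => by simp at hv, by simp [hE]⟩
    · obtain ⟨e, he⟩ := Set.nonempty_iff_ne_empty.mpr hE
      induction e using Sym2.ind with
      | _ x y =>
      have hxy : G.Adj x y := G.mem_edgeSet.mp he
      obtain ⟨p, u, hpu, hu1⟩ := exists_leaf hac hxy
      set G' := G.deleteEdges (G.incidenceSet p) with hG'
      have hle : G' ≤ G := G.deleteEdges_le _
      have hG'ac : G'.IsAcyclic := fun v c hc => hac (c.mapLe hle) (hc.mapLe hle)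
      have hG'deg : ∀ v, (G'.neighborSet v).ncard ≤ k := fun v =>
        le_trans (Set.ncard_le_ncard (fun w hw => hle hw) (Set.toFinite _)) (hdeg v)
      have hsub : G.incidenceSet p ⊆ G.edgeSet := G.incidenceSet_subset p
      have hEcard : G'.edgeSet.ncard + (G.incidenceSet p).ncard = G.edgeSet.ncard := by
        rw [hG', edgeSet_deleteEdges]
        exact Set.ncard_diff_add_ncard_of_subset hsub (Set.toFinite _)
      have hpin : s(p, u) ∈ G.incidenceSet p := ⟨G.mem_edgeSet.mpr hpu, Sym2.mem_mk_left p u⟩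
      have hinc_pos : 0 < (G.incidenceSet p).ncard :=
        (Set.ncard_pos (Set.toFinite _)).mpr ⟨_, hpin⟩
      have hinc_le : (G.incidenceSet p).ncard ≤ k := by
        have heq : (G.incidenceSet p).ncard = (G.neighborSet p).ncard := by
          rw [← Nat.card_coe_set_eq, ← Nat.card_coe_set_eq]
          exact Nat.card_congr (G.incidenceSetEquivNeighborSet p)
        rw [heq]; exact hdeg p
      have hn' : G'.edgeSet.ncard ≤ n := by omega
      obtain ⟨M', hM', hcard'⟩ := ih G' hn' hG'ac hG'deg
      have hpiso : ∀ z, ¬ G'.Adj p z := by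
        intro z hz
        rw [hG', deleteEdges_adj] at hz
        exact hz.2 ⟨hz.1, Sym2.mem_mk_left _ _⟩
      have huiso : ∀ z, ¬ G'.Adj u z := by
        intro z hz
        rw [hG', deleteEdges_adj] at hz
        have hzp : z = p := by
          obtain ⟨a, ha⟩ := Set.ncard_eq_one.mp hu1
          have h1 : z ∈ G.neighborSet u := hz.1
          have h2 : p ∈ G.neighborSet u := hpu.symm
          rw [ha, Set.mem_singleton_iff] at h1 h2
          rw [h1, h2]
        subst hzp
        exact hz.2 ⟨G.mem_edgeSet.mpr hz.1, Sym2.mem_mk_right _ _⟩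
      set Mm := M'.map (SimpleGraph.Hom.ofLE hle) with hMm
      have hmmadj : ∀ a b, Mm.Adj a b ↔ M'.Adj a b := by
        intro a b
        simp only [hMm, Subgraph.map_adj, Hom.coe_ofLE, Relation.Map, id_eq]
        constructor
        · rintro ⟨c, d, h, rfl, rfl⟩; exact h
        · exact fun h => ⟨a, b, h, rfl, rfl⟩
      have hdisj : Disjoint Mm.support (G.subgraphOfAdj hpu).support := by
        rw [Set.disjoint_left]
        intro z hzM hzS
        obtain ⟨w, hw⟩ := hzM
        have hG'zw : G'.Adj z w := M'.adj_sub ((hmmadj _ _).mp hw)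
        rw [SimpleGraph.support_subgraphOfAdj] at hzS
        rcases hzS with rfl | rfl
        · exact hpiso w hG'zw
        · exact huiso w hG'zw
      refine ⟨Mm ⊔ G.subgraphOfAdj hpu,
        Subgraph.IsMatching.sup (hM'.map_ofLE hle)
          (Subgraph.IsMatching.subgraphOfAdj hpu) hdisj, ?_⟩
      have hMmE : Mm.edgeSet = M'.edgeSet := by
        ext e
        induction e using Sym2.ind with
        | _ a b =>
          simp only [Subgraph.mem_edgeSet]
          exact hmmadj a b
      have hnotmem : s(p, u) ∉ M'.edgeSet := fun h =>
        hpiso u (M'.adj_sub (Subgraph.mem_edgeSet.mp h))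
      have hMcard : (Mm ⊔ G.subgraphOfAdj hpu).edgeSet.ncard = M'.edgeSet.ncard + 1 := by
        rw [Subgraph.edgeSet_sup, SimpleGraph.edgeSet_subgraphOfAdj, hMmE,
          Set.union_singleton, Set.ncard_insert_of_notMem hnotmem (Set.toFinite _)]
      rw [← hEcard, hMcard, Nat.mul_add, Nat.mul_one]
      exact Nat.add_le_add hcard' hinc_le

/-- Every tree of order `n` with maximum degree at most `k` (`k ≥ 3`) has a
matching of size at least `(n-1)/k`. -/
theorem tree_matching_bound {V : Type*} [Fintype V] (G : SimpleGraph V)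
    [DecidableRel G.Adj] (k : ℕ) (hk : 3 ≤ k)
    (htree : G.IsTree) (hdeg : ∀ v : V, G.degree v ≤ k) :
    ∃ M : G.Subgraph, M.IsMatching ∧ Fintype.card V - 1 ≤ k * M.edgeSet.ncard := by
  classical
  have hdeg' : ∀ v, (G.neighborSet v).ncard ≤ k := fun v => by
    rw [Set.ncard_eq_toFinset_card']
    exact hdeg v
  obtain ⟨M, hM, hle⟩ := forest_bound k (by omega) (G.edgeSet.ncard) G le_rfl
    htree.IsAcyclic hdeg'
  refine ⟨M, hM, ?_⟩
  have hcard : G.edgeSet.ncard = Fintype.card V - 1 := by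
    have h2 : G.edgeFinset.card + 1 = Fintype.card V := htree.card_edgeFinset
    rw [Set.ncard_eq_toFinset_card']
    have h3 : G.edgeSet.toFinset = G.edgeFinset := rfl
    rw [h3]
    omega
  rw [← hcard]
  exact hle
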